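/- Let f be twice continuously differentiable at x₀ with f(x₀) > 0 and F(x₀) < 1, where F is the CDF of f. Let M(z) = z − ∫_{-∞}^z F(u) du and H = f/(1−F). Then the function u ↦ H(M^{-1}(M(x₀) + u)) has second derivative at u = 0 equal to [(1−F)·{(1−F)f'' + 4 f f'} + 3 f³]/(1−F)^5 evaluated at x₀. -/

import Mathlib

open MeasureTheory Set

/-- With M(z) = z − ∫_{-∞}^z F and H = f/(1−F), the function
u ↦ H(M⁻¹(M(x₀)+u)) has second derivative at 0 equal to
[(1−F){(1−F)f'' + 4ff'} + 3f³]/(1−F)^5 at x₀. -/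
theorem direct_bias_second_derivative
    (F f M Minv : ℝ → ℝ) (x₀ : ℝ)
    (hf : ContDiffAt ℝ 2 f x₀)
    (hf_density : ∀ x, HasDerivAt F (f x) x)
    (hfpos : 0 < f x₀) (hFlt : F x₀ < 1)
    (hM : ∀ z, M z = z - ∫ u in Iic z, F u)
    (hM' : ∀ z, HasDerivAt M (1 - F z) z)
    (hMinv_right : ∀ y, M (Minv y) = y)
    (hMinv_left : ∀ z, Minv (M z) = z) :
    iteratedDeriv 2
        (fun u => f (Minv (M x₀ + u)) / (1 - F (Minv (M x₀ + u)))) 0 =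
      ((1 - F x₀) * ((1 - F x₀) * iteratedDeriv 2 f x₀ + 4 * f x₀ * deriv f x₀)
          + 3 * (f x₀) ^ 3) / (1 - F x₀) ^ 5 := by
  have hFcont : Continuous F := by
    rw [continuous_iff_continuousAt]
    exact fun x => (hf_density x).continuousAt
  have hMcont : Continuous M := by
    rw [continuous_iff_continuousAt]
    exact fun x => (hM' x).continuousAt
  have hMinj : Function.Injective M := Function.LeftInverse.injective hMinv_left
  have hMinv_surj : Function.Surjective Minv := fun z => ⟨M z, hMinv_left z⟩
  have hMinv_cont : Continuous Minv := by
    rcases hMcont.strictMono_of_inj hMinj with h | h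
    · have hm : Monotone Minv := by
        intro a b hab
        by_contra hlt
        push_neg at hlt
        have h2 := h hlt
        rw [hMinv_right, hMinv_right] at h2
        exact absurd hab (not_le.2 h2)
      exact hm.continuous_of_surjective hMinv_surj
    · have hm : Antitone Minv := by
        intro a b hab
        by_contra hlt
        push_neg at hlt
        have h2 := h hlt
        rw [hMinv_right, hMinv_right] at h2
        exact absurd hab (not_le.2 h2)
      have hm2 : Monotone (fun y => Minv (-y)) := fun a b hab => hm (neg_le_neg hab)
      have hs2 : Function.Surjective (fun y => Minv (-y)) := by
        intro z; obtain ⟨y, hy⟩ := hMinv_surj z; exact ⟨-y, by simpa using hy⟩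
      have h4 := (hm2.continuous_of_surjective hs2).comp continuous_neg
      have : Minv = (fun y => Minv (-y)) ∘ fun a : ℝ => -a := by
        funext y; simp
      rw [this]; exact h4
  set c := M x₀ with hc
  set φ : ℝ → ℝ := fun u => Minv (c + u) with hφ
  have hφcont : Continuous φ := hMinv_cont.comp (continuous_const.add continuous_id)
  have hφ0 : φ 0 = x₀ := by simp [hφ, hc, hMinv_left]
  -- f is C² on an open set around x₀
  obtain ⟨s, hs, hfs⟩ := hf.contDiffOn (le_refl 2) (by simp)
  obtain ⟨t, hts, htopen, hxt⟩ := mem_nhds_iff.1 hs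
  have hft : ContDiffOn ℝ 2 f t := hfs.mono hts
  have hft' : DifferentiableOn ℝ f t ∧ ContDiffOn ℝ 1 (deriv f) t := by
    have := (contDiffOn_succ_iff_deriv_of_isOpen (n := 1) (f := f) (s := t) htopen).1
      (by exact_mod_cast hft)
    exact ⟨this.1, this.2.2⟩
  have hf'' : HasDerivAt (deriv f) (deriv (deriv f) x₀) x₀ := by
    have : DifferentiableAt ℝ (deriv f) x₀ :=
      (hft'.2.differentiableOn one_ne_zero).differentiableAt (htopen.mem_nhds hxt)
    exact this.hasDerivAt
  have hf' : HasDerivAt f (deriv f x₀) x₀ := by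
    have : DifferentiableAt ℝ f x₀ :=
      hft'.1.differentiableAt (htopen.mem_nhds hxt)
    exact this.hasDerivAt
  -- eventual facts near u = 0
  have hφtend : Filter.Tendsto φ (nhds 0) (nhds x₀) := by
    rw [← hφ0]; exact hφcont.continuousAt
  have hev1 : ∀ᶠ u in nhds (0 : ℝ), F (φ u) < 1 := by
    have h3 : Filter.Tendsto (fun u => F (φ u)) (nhds 0) (nhds (F x₀)) :=
      Filter.Tendsto.comp hFcont.continuousAt hφtend
    exact h3.eventually_lt_const hFlt
  have hev2 : ∀ᶠ u in nhds (0 : ℝ), DifferentiableAt ℝ f (φ u) := by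
    have hmem : ∀ᶠ u in nhds (0 : ℝ), φ u ∈ t := hφtend (htopen.mem_nhds hxt)
    filter_upwards [hmem] with u hu
    exact hft'.1.differentiableAt (htopen.mem_nhds hu)
  -- derivative of φ
  have hφ' : ∀ u, F (φ u) < 1 → HasDerivAt φ (1 - F (φ u))⁻¹ u := by
    intro u hu
    have h1 : HasDerivAt Minv (1 - F (Minv (c + u)))⁻¹ (c + u) :=
      HasDerivAt.of_local_left_inverse hMinv_cont.continuousAt
        (hM' (Minv (c + u))) (by simp only [hφ] at hu; intro h0; nlinarith)
        (Filter.Eventually.of_forall hMinv_right)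
    have h2 : HasDerivAt (fun u : ℝ => c + u) 1 u := (hasDerivAt_id u).const_add c
    have h3 := h1.comp u h2
    rw [mul_one] at h3
    exact h3
  set ψ : ℝ → ℝ := fun x => (deriv f x * (1 - F x) + f x ^ 2) / (1 - F x) ^ 3 with hψdef
  -- first derivative of the composite, eventually
  have key : ∀ᶠ u in nhds (0 : ℝ),
      HasDerivAt (fun u => f (φ u) / (1 - F (φ u))) (ψ (φ u)) u := by
    filter_upwards [hev1, hev2] with u hu1 hu2
    have hne : (1 : ℝ) - F (φ u) ≠ 0 := by intro h0; nlinarith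
    have hφu := hφ' u hu1
    have hnum : HasDerivAt (fun u => f (φ u)) (deriv f (φ u) * (1 - F (φ u))⁻¹) u :=
      hu2.hasDerivAt.comp u hφu
    have hden : HasDerivAt (fun u => 1 - F (φ u)) (-(f (φ u) * (1 - F (φ u))⁻¹)) u := by
      have := ((hf_density (φ u)).comp u hφu).const_sub 1
      simpa using this
    have := hnum.div hden hne
    refine this.congr_deriv ?_
    simp only [ψ]
    field_simp
    ring
  -- express the second derivative
  have hderiv_eq : Set.EqOn (deriv (fun u => f (φ u) / (1 - F (φ u)))) (fun u => ψ (φ u))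
      Set.univ → True := fun _ => trivial
  have hde : deriv (fun u => f (φ u) / (1 - F (φ u))) =ᶠ[nhds (0 : ℝ)] fun u => ψ (φ u) :=
    key.mono fun u hu => hu.deriv
  have h1F : (1 : ℝ) - F x₀ ≠ 0 := by intro h0; nlinarith
  -- derivative of ψ at x₀
  have hN : HasDerivAt (fun x => deriv f x * (1 - F x) + f x ^ 2)
      (deriv (deriv f) x₀ * (1 - F x₀) + deriv f x₀ * (-(f x₀))
        + 2 * f x₀ ^ 1 * deriv f x₀) x₀ := by
    have h1 := hf''.fun_mul ((hf_density x₀).const_sub 1)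
    have h2 := hf'.fun_pow 2
    have h3 := h1.fun_add h2
    refine h3.congr_deriv ?_
    norm_num
  have hD : HasDerivAt (fun x => (1 - F x) ^ 3) (3 * (1 - F x₀) ^ 2 * (-(f x₀))) x₀ := by
    have h3 := ((hf_density x₀).const_sub 1).fun_pow 3
    refine h3.congr_deriv ?_
    norm_num
  have hψ' : HasDerivAt ψ
      (((deriv (deriv f) x₀ * (1 - F x₀) + deriv f x₀ * (-(f x₀))
          + 2 * f x₀ ^ 1 * deriv f x₀) * (1 - F x₀) ^ 3 -
        (deriv f x₀ * (1 - F x₀) + f x₀ ^ 2) * (3 * (1 - F x₀) ^ 2 * (-(f x₀)))) /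
        ((1 - F x₀) ^ 3) ^ 2) x₀ :=
    hN.div hD (pow_ne_zero 3 h1F)
  have hφd0 : HasDerivAt φ (1 - F x₀)⁻¹ 0 := by
    have := hφ' 0 (by rw [hφ0]; exact hFlt)
    rwa [hφ0] at this
  have hcomp : HasDerivAt (fun u => ψ (φ u))
      ((((deriv (deriv f) x₀ * (1 - F x₀) + deriv f x₀ * (-(f x₀))
          + 2 * f x₀ ^ 1 * deriv f x₀) * (1 - F x₀) ^ 3 -
        (deriv f x₀ * (1 - F x₀) + f x₀ ^ 2) * (3 * (1 - F x₀) ^ 2 * (-(f x₀)))) /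
        ((1 - F x₀) ^ 3) ^ 2) * (1 - F x₀)⁻¹) 0 := by
    rw [← hφ0] at hψ'
    have h4 := hψ'.comp 0 hφd0
    rw [hφ0] at h4
    exact h4
  have hiter2 : iteratedDeriv 2 f x₀ = deriv (deriv f) x₀ := by
    rw [show (2 : ℕ) = 1 + 1 from rfl, iteratedDeriv_succ, iteratedDeriv_one]
  calc iteratedDeriv 2 (fun u => f (φ u) / (1 - F (φ u))) 0
      = deriv (deriv (fun u => f (φ u) / (1 - F (φ u)))) 0 := by
        rw [show (2 : ℕ) = 1 + 1 from rfl, iteratedDeriv_succ, iteratedDeriv_one]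
    _ = deriv (fun u => ψ (φ u)) 0 := hde.deriv_eq
    _ = _ := by
        rw [hcomp.deriv, hiter2]
        field_simp
        ring
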